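/- Let A be a 2×2 matrix with integer entries. If A^n is a diagonal matrix for some n ≥ 1, then A^k is a diagonal matrix with non-negative entries for some k ∈ {1,2,3,4,6,8,12}. -/

import Mathlib

open Matrix Polynomial

private def pqAux (t d : ℤ) : ℕ → ℤ × ℤ
  | 0 => (0, 1)
  | j+1 => (t * (pqAux t d j).1 + (pqAux t d j).2, -d * (pqAux t d j).1)

private lemma pqAux_rec (t d : ℤ) (j : ℕ) :
    (pqAux t d (j+2)).1 = t * (pqAux t d (j+1)).1 - d * (pqAux t d j).1 := by
  simp [pqAux]; ring

private lemma sq_eq (A : Matrix (Fin 2) (Fin 2) ℤ) :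
    A ^ 2 = A.trace • A + (-A.det) • (1 : Matrix (Fin 2) (Fin 2) ℤ) := by
  ext i j
  simp only [pow_two, Matrix.mul_apply, Matrix.add_apply, Matrix.smul_apply,
    smul_eq_mul, Matrix.one_apply, Matrix.trace_fin_two, Matrix.det_fin_two,
    Fin.sum_univ_two]
  fin_cases i <;> fin_cases j <;> simp <;> ring

private lemma pow_eq (A : Matrix (Fin 2) (Fin 2) ℤ) (j : ℕ) :
    A ^ j = (pqAux A.trace A.det j).1 • A + (pqAux A.trace A.det j).2 • 1 := by
  induction j with
  | zero => simp [pqAux]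
  | succ j ih =>
    have h2 := sq_eq A
    have h3 : A ^ (j+1) = (pqAux A.trace A.det j).1 • (A ^ 2)
        + (pqAux A.trace A.det j).2 • A := by
      rw [pow_succ, ih, pow_two]
      rw [add_mul, smul_mul_assoc, smul_mul_assoc, one_mul]
    rw [h3, h2]
    show _ = (A.trace * (pqAux A.trace A.det j).1 + (pqAux A.trace A.det j).2) • A
        + (-A.det * (pqAux A.trace A.det j).1) • (1 : Matrix (Fin 2) (Fin 2) ℤ)
    module

private lemma key (t d : ℤ) (n : ℕ) (hn : 1 ≤ n) (hpn : (pqAux t d n).1 = 0) :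
    (pqAux t d 2).1 = 0 ∨ (pqAux t d 3).1 = 0 ∨ (pqAux t d 4).1 = 0 ∨
      (pqAux t d 6).1 = 0 := by
  by_cases ht : t = 0
  · left; simp [pqAux, ht]
  by_cases hd : d = 0
  · -- p (j+1) = t ^ j never vanishes: contradiction
    exfalso
    have hp : ∀ j, (pqAux t d (j+1)).1 = t ^ j := by
      intro j
      induction j with
      | zero => simp [pqAux]
      | succ j ih => rw [pqAux_rec, ih, hd]; ring
    obtain ⟨j, rfl⟩ := Nat.exists_eq_add_of_le' hn
    rw [hp] at hpn
    exact pow_ne_zero _ ht hpn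
  obtain ⟨s, hs⟩ : ∃ s : ℂ, s ^ 2 = (t:ℂ)^2 - 4*(d:ℂ) :=
    IsAlgClosed.exists_pow_nat_eq _ (by norm_num)
  by_cases hs0 : s = 0
  · -- repeated eigenvalue: t = 2u, d = u^2, p (j+1) = (j+1) u^j, contradiction
    exfalso
    have ht4 : t^2 = 4*d := by
      have hc : ((t^2 - 4*d : ℤ) : ℂ) = 0 := by
        push_cast
        rw [hs0] at hs
        linear_combination -hs
      have : (t^2 - 4*d : ℤ) = 0 := by exact_mod_cast hc
      linarith
    have hte : (2:ℤ) ∣ t := by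
      have h2 : (2:ℤ) ∣ t^2 := ⟨2*d, by linarith⟩
      exact Int.Prime.dvd_pow' Nat.prime_two h2
    obtain ⟨u, hu⟩ := hte
    have hdu : d = u^2 := by rw [hu] at ht4; ring_nf at ht4; linarith
    have hp : ∀ j, (pqAux t d (j+1)).1 = (j+1) * u^j ∧
        (pqAux t d (j+2)).1 = (j+2) * u^(j+1) := by
      intro j
      induction j with
      | zero => constructor <;> simp [pqAux] <;> push_cast <;> linarith
      | succ j ih =>
        refine ⟨by rw [ih.2]; push_cast; ring, ?_⟩
        rw [pqAux_rec, ih.1, ih.2, hu, hdu]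
        push_cast
        ring
    obtain ⟨j, rfl⟩ := Nat.exists_eq_add_of_le' hn
    rw [(hp j).1] at hpn
    rcases mul_eq_zero.mp hpn with h | h
    · omega
    · have hu0 : u = 0 := (pow_eq_zero_iff'.mp h).1
      rw [hu0, mul_zero] at hu
      exact ht hu
  · -- distinct eigenvalues
    set lam1 : ℂ := ((t:ℂ) + s)/2 with hl1
    set lam2 : ℂ := ((t:ℂ) - s)/2 with hl2
    have hsum : lam1 + lam2 = (t:ℂ) := by rw [hl1, hl2]; ring
    have hprod : lam1 * lam2 = (d:ℂ) := by rw [hl1, hl2]; linear_combination (-1/4 : ℂ) * hs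
    have hdc : (d:ℂ) ≠ 0 := by exact_mod_cast hd
    have hl1ne : lam1 ≠ 0 := by
      intro h; rw [h, zero_mul] at hprod; exact hdc hprod.symm
    have hl2ne : lam2 ≠ 0 := by
      intro h; rw [h, mul_zero] at hprod; exact hdc hprod.symm
    have hform : ∀ j, ((pqAux t d j).1 : ℂ) * s = lam1^j - lam2^j ∧
        ((pqAux t d (j+1)).1 : ℂ) * s = lam1^(j+1) - lam2^(j+1) := by
      intro j
      induction j with
      | zero => constructor <;> simp [pqAux, hl1, hl2] <;> ring
      | succ j ih =>
        refine ⟨ih.2, ?_⟩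
        rw [pqAux_rec]
        push_cast
        have expand : ((t:ℂ) * ((pqAux t d (j+1)).1:ℂ) - (d:ℂ) * ((pqAux t d j).1:ℂ)) * s
            = (t:ℂ) * (((pqAux t d (j+1)).1:ℂ) * s) - (d:ℂ) * (((pqAux t d j).1:ℂ) * s) := by
          ring
        rw [expand, ih.1, ih.2]
        linear_combination (lam1^(j+1) - lam2^(j+1)) * hsum - (lam1^j - lam2^j) * hprod
          + ((lam2^j - lam1^j)/2) * hs
    set z : ℂ := lam1 / lam2 with hz
    have hzn : z ^ n = 1 := by
      have h1 := (hform n).1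
      rw [hpn] at h1
      push_cast at h1
      rw [zero_mul] at h1
      have hps : lam1 ^ n = lam2 ^ n := by linear_combination -h1
      rw [hz, div_pow, hps, div_self (pow_ne_zero _ hl2ne)]
    have hz1 : z ≠ 1 := by
      intro h
      rw [hz, div_eq_one_iff_eq hl2ne] at h
      apply hs0
      have hdiff : lam1 - lam2 = s := by rw [hl1, hl2]; ring
      rw [h] at hdiff; simpa using hdiff.symm
    have hz0 : z ≠ 0 := div_ne_zero hl1ne hl2ne
    have hzero : ∀ m : ℕ, z ^ m = 1 → (pqAux t d m).1 = 0 := by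
      intro m hm
      have h1 := (hform m).1
      rw [hz, div_pow, div_eq_one_iff_eq (pow_ne_zero _ hl2ne)] at hm
      rw [hm, sub_self] at h1
      rcases mul_eq_zero.mp h1 with h | h
      · exact_mod_cast h
      · exact absurd h hs0
    -- z is a root of unity, hence integral over ℤ
    have hzint : IsIntegral ℤ z := by
      refine ⟨X ^ n - 1, ?_, ?_⟩
      · simpa using monic_X_pow_sub_C (1:ℤ) (by omega)
      · simp [hzn]
    have hinv : z⁻¹ = z ^ (n-1) := by
      have hmul : z * z ^ (n-1) = 1 := by
        rw [← pow_succ', Nat.sub_add_cancel hn, hzn]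
      exact inv_eq_of_mul_eq_one_right hmul
    have hsumint : IsIntegral ℤ (z + z⁻¹) := by
      rw [hinv]; exact hzint.add (hzint.pow _)
    have hratval : z + z⁻¹ = (((t^2 - 2*d : ℤ) : ℂ)) / ((d : ℤ) : ℂ) := by
      have hnum : lam1*lam1 + lam2*lam2 = (t:ℂ)^2 - 2*(d:ℂ) := by
        linear_combination (lam1 + lam2 + (t:ℂ)) * hsum - 2 * hprod
      have hden : lam2 * lam1 = (d:ℂ) := by rw [mul_comm]; exact hprod
      rw [hz, inv_div, div_add_div _ _ hl2ne hl1ne, hnum, hden]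
      push_cast
      ring
    set q : ℚ := ((t^2 - 2*d : ℤ) : ℚ) / ((d : ℤ) : ℚ) with hq
    have hqc : algebraMap ℚ ℂ q = z + z⁻¹ := by
      rw [eq_ratCast, hq, hratval]
      push_cast
      ring
    have hQint : IsIntegral ℤ q :=
      (isIntegral_algebraMap_iff (algebraMap ℚ ℂ).injective).mp (hqc ▸ hsumint)
    obtain ⟨w, hw⟩ := IsIntegrallyClosed.isIntegral_iff.mp hQint
    have hwc : (w:ℂ) = z + z⁻¹ := by
      rw [← hqc, ← hw]
      simp [eq_intCast]
    -- |w| ≤ 2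
    have habs : ‖z‖ = 1 := Complex.norm_eq_one_of_pow_eq_one hzn (by omega)
    have hrew : (w:ℂ) = ((2 * z.re : ℝ) : ℂ) := by
      rw [hwc, Complex.inv_eq_conj habs, Complex.add_conj]
    have hre : (w:ℝ) = 2 * z.re := by exact_mod_cast hrew
    have h1 : |z.re| ≤ 1 := by
      have h := Complex.abs_re_le_norm z
      rw [habs] at h
      exact h
    have h2 : |(w:ℝ)| ≤ 2 := by
      rw [hre, abs_mul]
      have : |(2:ℝ)| = 2 := by norm_num
      rw [this]
      linarith
    have hwabs : |w| ≤ 2 := by exact_mod_cast h2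
    obtain ⟨hwl, hwr⟩ := abs_le.mp hwabs
    have hquad : z^2 + 1 = (w:ℂ) * z := by
      rw [hwc, add_mul, inv_mul_cancel₀ hz0]; ring
    interval_cases w <;> push_cast at hquad
    · -- w = -2 : z = -1, z^2 = 1
      left
      refine hzero 2 ?_
      have hzz : (z + 1)^2 = 0 := by linear_combination hquad
      have h0 : z = -1 := eq_neg_of_add_eq_zero_left (pow_eq_zero_iff two_ne_zero |>.mp hzz)
      rw [h0]; norm_num
    · -- w = -1 : z^3 = 1
      exact Or.inr (Or.inl (hzero 3 (by linear_combination (z - 1) * hquad)))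
    · -- w = 0 : z^4 = 1
      exact Or.inr (Or.inr (Or.inl (hzero 4 (by linear_combination (z^2 - 1) * hquad))))
    · -- w = 1 : z^6 = 1
      exact Or.inr (Or.inr (Or.inr (hzero 6
        (by linear_combination (z^4 + z^3 - z - 1) * hquad))))
    · -- w = 2 : z = 1, contradiction
      exfalso
      have hzz : (z - 1)^2 = 0 := by linear_combination hquad
      have h0 : z = 1 := by
        have := pow_eq_zero_iff (two_ne_zero) |>.mp hzz
        linear_combination this
      exact hz1 h0

private lemma finish_lemma (A : Matrix (Fin 2) (Fin 2) ℤ) (m : ℕ)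
    (hm : (pqAux A.trace A.det m).1 = 0) :
    (A ^ (2*m)).IsDiag ∧ ∀ i j, 0 ≤ (A ^ (2*m)) i j := by
  have h1 : A ^ m = (pqAux A.trace A.det m).2 • 1 := by
    rw [pow_eq, hm]; simp
  have h2 : A ^ (2*m) = ((pqAux A.trace A.det m).2 ^ 2) • 1 := by
    rw [mul_comm, pow_mul, h1, _root_.smul_pow, one_pow]
  rw [h2]
  constructor
  · exact Matrix.isDiag_smul_one _ _
  · intro i j
    rw [Matrix.smul_apply, Matrix.one_apply, smul_eq_mul]
    split <;> [skip; simp] <;> positivity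

/-- If a power `A^n` (n ≥ 1) of a 2×2 integer matrix is diagonal, then `A^k` is
diagonal with non-negative entries for some `k ∈ {1,2,3,4,6,8,12}`. -/
theorem stmt_1 (A : Matrix (Fin 2) (Fin 2) ℤ) (n : ℕ) (hn : 1 ≤ n)
    (h : (A ^ n).IsDiag) :
    ∃ k ∈ ({1, 2, 3, 4, 6, 8, 12} : Finset ℕ),
      (A ^ k).IsDiag ∧ ∀ i j, 0 ≤ (A ^ k) i j := by
  by_cases hdiag : A.IsDiag
  · -- A itself diagonal: A^2 works
    refine ⟨2, by decide, ?_, ?_⟩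
    · have h01 : A 0 1 = 0 := hdiag (by decide)
      have h10 : A 1 0 = 0 := hdiag (by decide)
      intro i j hij
      fin_cases i <;> fin_cases j <;>
        simp_all [pow_two, Matrix.mul_apply, Fin.sum_univ_two]
    · have h01 : A 0 1 = 0 := hdiag (by decide)
      have h10 : A 1 0 = 0 := hdiag (by decide)
      intro i j
      fin_cases i <;> fin_cases j <;>
        simp [pow_two, Matrix.mul_apply, Fin.sum_univ_two, h01, h10] <;>
        exact mul_self_nonneg _
  · -- A not diagonal: some off-diagonal entry is nonzero
    have hoff : A 0 1 ≠ 0 ∨ A 1 0 ≠ 0 := by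
      by_contra hc
      push_neg at hc
      exact hdiag (by intro i j hij; fin_cases i <;> fin_cases j <;> simp_all)
    obtain ⟨i, j, hij, hAij⟩ : ∃ i j : Fin 2, i ≠ j ∧ A i j ≠ 0 := by
      rcases hoff with h' | h'
      · exact ⟨0, 1, by decide, h'⟩
      · exact ⟨1, 0, by decide, h'⟩
    have hpn : (pqAux A.trace A.det n).1 = 0 := by
      have he := pow_eq A n
      have h0 : (A ^ n) i j = 0 := h hij
      rw [he] at h0
      rw [Matrix.add_apply, Matrix.smul_apply, Matrix.smul_apply,
        Matrix.one_apply_ne hij, smul_eq_mul, smul_eq_mul, mul_zero, add_zero] at h0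
      exact (mul_eq_zero.mp h0).resolve_right hAij
    rcases key A.trace A.det n hn hpn with hm | hm | hm | hm
    · exact ⟨4, by decide, (finish_lemma A 2 hm)⟩
    · exact ⟨6, by decide, (finish_lemma A 3 hm)⟩
    · exact ⟨8, by decide, (finish_lemma A 4 hm)⟩
    · exact ⟨12, by decide, (finish_lemma A 6 hm)⟩
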